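/- arXiv:0901.4638 — 2 statements merged into one kernel-verified Lean document; each statement's English description precedes it below -/
import Mathlib

section
/- (Equation satisfied by the divergence.) Suppose λ, μ are twice continuously differentiable on Ω with μ(x) ≥ δ₀ > 0 and λ(x) + 2μ(x) ≥ δ₀ > 0, and u : Ω → ℝⁿ is three times continuously differentiable and solves the Lamé system div(μ(∇u + (∇u)ᵗ)) + ∇(λ div u) = 0 in Ω. Then p := div u satisfies pointwise in Ω: (λ + 2μ) Δp + (∇λ − μ^{−1} λ ∇μ)·∇p − (μ^{−1} ∇μ·∇λ) div u − μ^{−1} ∇μ · ((∇u) + (∇u)ᵗ) ∇μ + div( (div u) ∇λ + (∇u + (∇u)ᵗ) ∇μ ) = 0. -/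
open Real Set

noncomputable section

/-- The `j`-th partial derivative `∂_j f` of a scalar function on `ℝⁿ`. -/
def pdir (n : ℕ) (j : Fin n) (f : EuclideanSpace ℝ (Fin n) → ℝ) :
    EuclideanSpace ℝ (Fin n) → ℝ :=
  fun x => fderiv ℝ f x (EuclideanSpace.single j 1)

section Helpers

variable {n : ℕ} {f g : EuclideanSpace ℝ (Fin n) → ℝ} {x : EuclideanSpace ℝ (Fin n)} {j k : Fin n}

lemma pdir_congr (h : f =ᶠ[nhds x] g) : pdir n j f x = pdir n j g x := by
  unfold pdir; rw [h.fderiv_eq]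

lemma pdir_add (hf : DifferentiableAt ℝ f x) (hg : DifferentiableAt ℝ g x) :
    pdir n j (fun y => f y + g y) x = pdir n j f x + pdir n j g x := by
  unfold pdir
  rw [fderiv_fun_add hf hg]; rfl

lemma pdir_mul (hf : DifferentiableAt ℝ f x) (hg : DifferentiableAt ℝ g x) :
    pdir n j (fun y => f y * g y) x = pdir n j f x * g x + f x * pdir n j g x := by
  unfold pdir
  rw [fderiv_fun_mul hf hg]
  simp [ContinuousLinearMap.add_apply, ContinuousLinearMap.smul_apply]
  ring

lemma pdir_sum {ι : Type*} {s : Finset ι} {F : ι → EuclideanSpace ℝ (Fin n) → ℝ}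
    (h : ∀ i ∈ s, DifferentiableAt ℝ (F i) x) :
    pdir n j (fun y => ∑ i ∈ s, F i y) x = ∑ i ∈ s, pdir n j (F i) x := by
  unfold pdir
  rw [fderiv_fun_sum h]
  simp

lemma pdir_zero : pdir n j (fun _ => (0:ℝ)) x = 0 := by
  unfold pdir; simp

lemma ContDiffAt.pdir' {m : ℕ∞} (h : ContDiffAt ℝ (m+1) f x) :
    ContDiffAt ℝ m (pdir n j f) x := by
  have := h.fderiv_right (m := m) le_rfl
  exact this.clm_apply contDiffAt_const

lemma pdir_cd {N : WithTop ℕ∞} {m : ℕ∞} (hle : ((m:WithTop ℕ∞)+1) ≤ N)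
    (h : ContDiffAt ℝ N f x) : ContDiffAt ℝ m (pdir n j f) x :=
  ContDiffAt.pdir' (h.of_le hle)

lemma pdir_comm (h : ContDiffAt ℝ 2 f x) :
    pdir n j (pdir n k f) x = pdir n k (pdir n j f) x := by
  have hd : DifferentiableAt ℝ (fderiv ℝ f) x :=
    (h.fderiv_right (m := 1) le_rfl).differentiableAt one_ne_zero
  have hsym := h.isSymmSndFDerivAt (by norm_num)
  have hcalc : ∀ a b : Fin n, pdir n a (pdir n b f) x =
      fderiv ℝ (fderiv ℝ f) x (EuclideanSpace.single a 1) (EuclideanSpace.single b 1) := by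
    intro a b
    unfold pdir
    rw [fderiv_clm_apply hd (differentiableAt_const _)]
    simp
  rw [hcalc, hcalc, hsym]

end Helpers

lemma key_algebra {n : ℕ} {M : ℝ} (hM : M ≠ 0) (L q0 : ℝ)
    (a b d P D2 A A' B B' C D E Jj : Fin n → ℝ)
    (hDE : ∀ j, D j = E j) (hA : ∀ j, A j = A' j) (hB : ∀ j, B j = B' j)
    (hH : ∀ j, D j + M * C j + (a j * q0 + L * P j) = 0)
    (hS : ∀ j, A j + B j + b j * C j + M * Jj j + d j * q0 + 2 * (a j * P j) + L * D2 j = 0)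
    (hJ : ∑ j, Jj j = 2 * ∑ j, D2 j) :
    (L + 2 * M) * (∑ j, D2 j) + (∑ j, (a j - M⁻¹ * L * b j) * P j) -
      (M⁻¹ * ∑ j, b j * a j) * q0 - M⁻¹ * (∑ j, b j * E j) +
      (∑ j, (P j * a j + q0 * d j + (B' j + A' j))) = 0 := by
  have key : ∀ j : Fin n,
      (L + 2 * M) * D2 j + (a j - M⁻¹ * L * b j) * P j - M⁻¹ * (b j * a j) * q0
        - M⁻¹ * (b j * E j) + (P j * a j + q0 * d j + (B' j + A' j))
      = (A j + B j + b j * C j + M * Jj j + d j * q0 + 2 * (a j * P j) + L * D2 j)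
        - M⁻¹ * (b j * (D j + M * C j + (a j * q0 + L * P j)))
        + (2 * M * D2 j - M * Jj j) := by
    intro j
    rw [hDE j, ← hA j, ← hB j]
    field_simp
    ring
  calc
    (L + 2 * M) * (∑ j, D2 j) + (∑ j, (a j - M⁻¹ * L * b j) * P j) -
      (M⁻¹ * ∑ j, b j * a j) * q0 - M⁻¹ * (∑ j, b j * E j) +
      (∑ j, (P j * a j + q0 * d j + (B' j + A' j)))
      = ∑ j, ((L + 2 * M) * D2 j + (a j - M⁻¹ * L * b j) * P j - M⁻¹ * (b j * a j) * q0
          - M⁻¹ * (b j * E j) + (P j * a j + q0 * d j + (B' j + A' j))) := by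
        simp only [Finset.mul_sum, Finset.sum_mul, ← Finset.sum_sub_distrib,
          ← Finset.sum_add_distrib]
    _ = ∑ j, ((0:ℝ) - M⁻¹ * (b j * 0) + (2 * M * D2 j - M * Jj j)) := by
        refine Finset.sum_congr rfl fun j _ => ?_
        rw [key j, hS j, hH j]
    _ = 0 := by
        simp only [Finset.sum_add_distrib, Finset.sum_sub_distrib, ← Finset.mul_sum]
        rw [hJ]
        simp only [Finset.sum_const_zero, mul_zero, zero_sub, neg_add_eq_zero]
        ring

/-- **Equation for the divergence (2.4)/(1.4).** If `λ, μ ∈ C²(Ω)` with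
`μ ≥ δ₀ > 0`, `λ + 2μ ≥ δ₀ > 0`, and `u ∈ C³(Ω, ℝⁿ)` solves the Lamé system
`div(μ(∇u + (∇u)ᵗ)) + ∇(λ div u) = 0` in `Ω`, then `p := div u` satisfies
`(λ+2μ)Δp + (∇λ − μ⁻¹λ∇μ)·∇p − (μ⁻¹∇μ·∇λ) div u − μ⁻¹∇μ·((∇u)+(∇u)ᵗ)∇μ`
`+ div((div u)∇λ + (∇u+(∇u)ᵗ)∇μ) = 0` pointwise in `Ω`. -/
theorem divergence_equation (n : ℕ) (hn : 2 ≤ n)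
    (Ω : Set (EuclideanSpace ℝ (Fin n))) (hΩ : IsOpen Ω) (δ₀ : ℝ) (hδ₀ : 0 < δ₀)
    (lam mu : EuclideanSpace ℝ (Fin n) → ℝ)
    (hlam : ContDiffOn ℝ 2 lam Ω) (hmu : ContDiffOn ℝ 2 mu Ω)
    (hmupos : ∀ x ∈ Ω, δ₀ ≤ mu x) (hell : ∀ x ∈ Ω, δ₀ ≤ lam x + 2 * mu x)
    (u : Fin n → EuclideanSpace ℝ (Fin n) → ℝ)
    (hu : ∀ j, ContDiffOn ℝ 3 (u j) Ω)
    (heq : ∀ j : Fin n, ∀ x ∈ Ω,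
      (∑ k, pdir n k (fun y => mu y * (pdir n k (u j) y + pdir n j (u k) y)) x) +
        pdir n j (fun y => lam y * ∑ i, pdir n i (u i) y) x = 0) :
    ∀ x ∈ Ω,
      (lam x + 2 * mu x) *
          (∑ j, pdir n j (pdir n j (fun y => ∑ i, pdir n i (u i) y)) x) +
        (∑ j, (pdir n j lam x - (mu x)⁻¹ * lam x * pdir n j mu x) *
          pdir n j (fun y => ∑ i, pdir n i (u i) y) x) -
        ((mu x)⁻¹ * ∑ j, pdir n j mu x * pdir n j lam x) * (∑ i, pdir n i (u i) x) -
        (mu x)⁻¹ *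
          (∑ j, pdir n j mu x *
            ∑ k, (pdir n k (u j) x + pdir n j (u k) x) * pdir n k mu x) +
        (∑ j, pdir n j (fun y =>
          (∑ i, pdir n i (u i) y) * pdir n j lam y +
            ∑ k, (pdir n k (u j) y + pdir n j (u k) y) * pdir n k mu y) x) = 0 := by
  intro x hx
  have memx : Ω ∈ nhds x := hΩ.mem_nhds hx
  have hMne : mu x ≠ 0 := ne_of_gt (lt_of_lt_of_le hδ₀ (hmupos x hx))
  -- basic smoothness at points of Ω
  have cdl : ∀ y ∈ Ω, ContDiffAt ℝ 2 lam y := fun y hy => hlam.contDiffAt (hΩ.mem_nhds hy)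
  have cdm : ∀ y ∈ Ω, ContDiffAt ℝ 2 mu y := fun y hy => hmu.contDiffAt (hΩ.mem_nhds hy)
  have cdu : ∀ j, ∀ y ∈ Ω, ContDiffAt ℝ 3 (u j) y :=
    fun j y hy => (hu j).contDiffAt (hΩ.mem_nhds hy)
  have cdu2 : ∀ j k, ∀ y ∈ Ω, ContDiffAt ℝ 2 (pdir n k (u j)) y :=
    fun j k y hy => pdir_cd (m := 2) (by norm_num) (cdu j y hy)
  have cdq : ∀ y ∈ Ω, ContDiffAt ℝ 2 (fun z => ∑ i, pdir n i (u i) z) y :=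
    fun y hy => ContDiffAt.sum fun i _ => cdu2 i i y hy
  have cdM : ∀ j k, ∀ y ∈ Ω,
      ContDiffAt ℝ 2 (fun z => pdir n k (u j) z + pdir n j (u k) z) y :=
    fun j k y hy => (cdu2 j k y hy).add (cdu2 k j y hy)
  -- differentiability facts
  have dl : ∀ y ∈ Ω, DifferentiableAt ℝ lam y :=
    fun y hy => (cdl y hy).differentiableAt two_ne_zero
  have dm : ∀ y ∈ Ω, DifferentiableAt ℝ mu y :=
    fun y hy => (cdm y hy).differentiableAt two_ne_zero
  have dl1 : ∀ (j : Fin n), ∀ y ∈ Ω, DifferentiableAt ℝ (pdir n j lam) y :=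
    fun j y hy => (pdir_cd (m := 1) (by norm_num) (cdl y hy)).differentiableAt one_ne_zero
  have dm1 : ∀ (j : Fin n), ∀ y ∈ Ω, DifferentiableAt ℝ (pdir n j mu) y :=
    fun j y hy => (pdir_cd (m := 1) (by norm_num) (cdm y hy)).differentiableAt one_ne_zero
  have dq : ∀ y ∈ Ω, DifferentiableAt ℝ (fun z => ∑ i, pdir n i (u i) z) y :=
    fun y hy => (cdq y hy).differentiableAt two_ne_zero
  have dq1 : ∀ (j : Fin n), ∀ y ∈ Ω,
      DifferentiableAt ℝ (pdir n j (fun z => ∑ i, pdir n i (u i) z)) y :=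
    fun j y hy => (pdir_cd (m := 1) (by norm_num) (cdq y hy)).differentiableAt one_ne_zero
  have dM : ∀ j k, ∀ y ∈ Ω,
      DifferentiableAt ℝ (fun z => pdir n k (u j) z + pdir n j (u k) z) y :=
    fun j k y hy => (cdM j k y hy).differentiableAt two_ne_zero
  have dM1 : ∀ j k (l : Fin n), ∀ y ∈ Ω,
      DifferentiableAt ℝ (pdir n l (fun z => pdir n k (u j) z + pdir n j (u k) z)) y :=
    fun j k l y hy => (pdir_cd (m := 1) (by norm_num) (cdM j k y hy)).differentiableAt one_ne_zero
  have du1 : ∀ j k, ∀ y ∈ Ω, DifferentiableAt ℝ (pdir n k (u j)) y :=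
    fun j k y hy => (cdu2 j k y hy).differentiableAt two_ne_zero
  have du2 : ∀ i j (k : Fin n), ∀ y ∈ Ω,
      DifferentiableAt ℝ (pdir n k (pdir n j (u i))) y :=
    fun i j k y hy => (pdir_cd (m := 1) (by norm_num) (cdu2 i j y hy)).differentiableAt one_ne_zero
  -- Step 1: product-rule expansion of the Lamé system, valid at every point of Ω
  have hHy : ∀ j, ∀ y ∈ Ω,
      (∑ k, (pdir n k mu y * (pdir n k (u j) y + pdir n j (u k) y) +
        mu y * pdir n k (fun z => pdir n k (u j) z + pdir n j (u k) z) y)) +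
      (pdir n j lam y * (∑ i, pdir n i (u i) y) +
        lam y * pdir n j (fun z => ∑ i, pdir n i (u i) z) y) = 0 := by
    intro j y hy
    have h0 := heq j y hy
    rw [Finset.sum_congr rfl (fun k _ => pdir_mul (dm y hy) (dM j k y hy)),
      pdir_mul (dl y hy) (dq y hy)] at h0
    exact h0
  -- Step 2: differentiating the (identically vanishing) expanded Lamé system
  have hS0 : ∀ j, pdir n j (fun y =>
      (∑ k, (pdir n k mu y * (pdir n k (u j) y + pdir n j (u k) y) +
        mu y * pdir n k (fun z => pdir n k (u j) z + pdir n j (u k) z) y)) +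
      (pdir n j lam y * (∑ i, pdir n i (u i) y) +
        lam y * pdir n j (fun z => ∑ i, pdir n i (u i) z) y)) x = 0 := by
    intro j
    rw [pdir_congr (Filter.eventuallyEq_of_mem memx (fun y hy => hHy j y hy)), pdir_zero]
  -- Step 3: full expansion of `pdir j` of the expanded system, i.e. `hS'` for key_algebra
  have hS' : ∀ j,
      (∑ k, (pdir n k (u j) x + pdir n j (u k) x) * pdir n j (pdir n k mu) x) +
      (∑ k, pdir n j (fun z => pdir n k (u j) z + pdir n j (u k) z) x * pdir n k mu x) +
      pdir n j mu x * (∑ k, pdir n k (fun z => pdir n k (u j) z + pdir n j (u k) z) x) +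
      mu x * (∑ k, pdir n j (pdir n k (fun z => pdir n k (u j) z + pdir n j (u k) z)) x) +
      pdir n j (pdir n j lam) x * (∑ i, pdir n i (u i) x) +
      2 * (pdir n j lam x * pdir n j (fun z => ∑ i, pdir n i (u i) z) x) +
      lam x * pdir n j (pdir n j (fun z => ∑ i, pdir n i (u i) z)) x = 0 := by
    intro j
    have h := hS0 j
    have dA : DifferentiableAt ℝ (fun y =>
        ∑ k, (pdir n k mu y * (pdir n k (u j) y + pdir n j (u k) y) +
          mu y * pdir n k (fun z => pdir n k (u j) z + pdir n j (u k) z) y)) x :=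
      DifferentiableAt.fun_sum fun k _ =>
        ((dm1 k x hx).mul (dM j k x hx)).add ((dm x hx).mul (dM1 j k k x hx))
    have dB : DifferentiableAt ℝ (fun y =>
        pdir n j lam y * (∑ i, pdir n i (u i) y) +
          lam y * pdir n j (fun z => ∑ i, pdir n i (u i) z) y) x :=
      ((dl1 j x hx).mul (dq x hx)).add ((dl x hx).mul (dq1 j x hx))
    rw [pdir_add dA dB,
      pdir_sum (fun k (_ : k ∈ (Finset.univ : Finset (Fin n))) =>
        ((dm1 k x hx).fun_mul (dM j k x hx)).fun_add ((dm x hx).fun_mul (dM1 j k k x hx))),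
      Finset.sum_congr rfl (fun k (_ : k ∈ (Finset.univ : Finset (Fin n))) =>
        pdir_add ((dm1 k x hx).fun_mul (dM j k x hx)) ((dm x hx).fun_mul (dM1 j k k x hx))),
      Finset.sum_congr rfl (fun k (_ : k ∈ (Finset.univ : Finset (Fin n))) => by
        rw [pdir_mul (dm1 k x hx) (dM j k x hx), pdir_mul (dm x hx) (dM1 j k k x hx)]),
      pdir_add ((dl1 j x hx).fun_mul (dq x hx)) ((dl x hx).fun_mul (dq1 j x hx)),
      pdir_mul (dl1 j x hx) (dq x hx), pdir_mul (dl x hx) (dq1 j x hx),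
      Finset.sum_add_distrib, Finset.sum_add_distrib, Finset.sum_add_distrib,
      ← Finset.mul_sum, ← Finset.mul_sum] at h
    rw [show (∑ k, (pdir n k (u j) x + pdir n j (u k) x) * pdir n j (pdir n k mu) x)
        = ∑ k, pdir n j (pdir n k mu) x * (pdir n k (u j) x + pdir n j (u k) x) from
        Finset.sum_congr rfl fun k _ => mul_comm _ _,
      show (∑ k, pdir n j (fun z => pdir n k (u j) z + pdir n j (u k) z) x * pdir n k mu x)
        = ∑ k, pdir n k mu x * pdir n j (fun z => pdir n k (u j) z + pdir n j (u k) z) x from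
        Finset.sum_congr rfl fun k _ => mul_comm _ _]
    linarith [h]
  -- Step 1': the expanded Lamé system at x itself, i.e. `hH` for key_algebra
  have hH' : ∀ j,
      (∑ k, pdir n k mu x * (pdir n k (u j) x + pdir n j (u k) x)) +
      mu x * (∑ k, pdir n k (fun z => pdir n k (u j) z + pdir n j (u k) z) x) +
      (pdir n j lam x * (∑ i, pdir n i (u i) x) +
        lam x * pdir n j (fun z => ∑ i, pdir n i (u i) z) x) = 0 := by
    intro j
    have h := hHy j x hx
    rw [Finset.sum_add_distrib, ← Finset.mul_sum] at h
    linarith [h]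
  -- Step 4: symmetry of second/third derivatives gives the trace identity `hJ`
  have hq2exp : ∀ l : Fin n,
      pdir n l (pdir n l (fun z => ∑ i, pdir n i (u i) z)) x
        = ∑ i, pdir n l (pdir n l (pdir n i (u i))) x := by
    intro l
    have h1 : pdir n l (fun z => ∑ i, pdir n i (u i) z) =ᶠ[nhds x]
        fun y => ∑ i, pdir n l (pdir n i (u i)) y :=
      Filter.eventuallyEq_of_mem memx fun y hy =>
        pdir_sum (fun i _ => du1 i i y hy)
    rw [pdir_congr h1, pdir_sum (fun i (_ : i ∈ (Finset.univ : Finset (Fin n))) =>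
      du2 i i l x hx)]
  have hswap1 : ∀ j k, pdir n j (pdir n k (pdir n k (u j))) x
      = pdir n k (pdir n k (pdir n j (u j))) x := by
    intro j k
    have h1 := pdir_comm (j := j) (k := k) (f := pdir n k (u j)) (cdu2 j k x hx)
    rw [h1, pdir_congr (Filter.eventuallyEq_of_mem memx fun y hy =>
      pdir_comm (j := j) (k := k) (f := u j) ((cdu j y hy).of_le (by norm_num)))]
  have hswap2 : ∀ j k, pdir n j (pdir n k (pdir n j (u k))) x
      = pdir n j (pdir n j (pdir n k (u k))) x := by
    intro j k
    exact pdir_congr (Filter.eventuallyEq_of_mem memx fun y hy =>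
      pdir_comm (j := k) (k := j) (f := u k) ((cdu k y hy).of_le (by norm_num)))
  have hMexp2 : ∀ j k, pdir n j (pdir n k (fun z => pdir n k (u j) z + pdir n j (u k) z)) x
      = pdir n j (pdir n k (pdir n k (u j))) x + pdir n j (pdir n k (pdir n j (u k))) x := by
    intro j k
    have h1 : pdir n k (fun z => pdir n k (u j) z + pdir n j (u k) z) =ᶠ[nhds x]
        fun y => pdir n k (pdir n k (u j)) y + pdir n k (pdir n j (u k)) y :=
      Filter.eventuallyEq_of_mem memx fun y hy => pdir_add (du1 j k y hy) (du1 k j y hy)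
    rw [pdir_congr h1, pdir_add (du2 j k k x hx) (du2 k j k x hx)]
  have hJ : ∑ j, (∑ k, pdir n j (pdir n k (fun z => pdir n k (u j) z + pdir n j (u k) z)) x)
      = 2 * ∑ j, pdir n j (pdir n j (fun z => ∑ i, pdir n i (u i) z)) x := by
    calc
      ∑ j, (∑ k, pdir n j (pdir n k (fun z => pdir n k (u j) z + pdir n j (u k) z)) x)
        = ∑ j, ∑ k, (pdir n k (pdir n k (pdir n j (u j))) x
            + pdir n j (pdir n j (pdir n k (u k))) x) :=
          Finset.sum_congr rfl fun j _ => Finset.sum_congr rfl fun k _ => by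
            rw [hMexp2 j k, hswap1 j k, hswap2 j k]
      _ = (∑ j, ∑ k, pdir n k (pdir n k (pdir n j (u j))) x)
          + ∑ j, ∑ k, pdir n j (pdir n j (pdir n k (u k))) x := by
          rw [← Finset.sum_add_distrib]
          exact Finset.sum_congr rfl fun j _ => Finset.sum_add_distrib
      _ = (∑ k : Fin n, ∑ j, pdir n k (pdir n k (pdir n j (u j))) x)
          + ∑ j, ∑ k, pdir n j (pdir n j (pdir n k (u k))) x := by
          rw [Finset.sum_comm]
      _ = (∑ k : Fin n, pdir n k (pdir n k (fun z => ∑ i, pdir n i (u i) z)) x)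
          + ∑ j, pdir n j (pdir n j (fun z => ∑ i, pdir n i (u i) z)) x := by
          rw [Finset.sum_congr rfl fun k (_ : k ∈ (Finset.univ : Finset (Fin n))) =>
            (hq2exp k).symm]
      _ = 2 * ∑ j, pdir n j (pdir n j (fun z => ∑ i, pdir n i (u i) z)) x := by ring
  -- Step 5: expansion of the divergence term in the goal
  have hT5 : ∀ j, pdir n j (fun y =>
      (∑ i, pdir n i (u i) y) * pdir n j lam y +
        ∑ k, (pdir n k (u j) y + pdir n j (u k) y) * pdir n k mu y) x
      = (pdir n j (fun z => ∑ i, pdir n i (u i) z) x * pdir n j lam x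
          + (∑ i, pdir n i (u i) x) * pdir n j (pdir n j lam) x)
        + ((∑ k, pdir n j (fun z => pdir n k (u j) z + pdir n j (u k) z) x * pdir n k mu x)
          + (∑ k, (pdir n k (u j) x + pdir n j (u k) x) * pdir n j (pdir n k mu) x)) := by
    intro j
    have hsum_d : DifferentiableAt ℝ (fun y =>
        ∑ k, (pdir n k (u j) y + pdir n j (u k) y) * pdir n k mu y) x :=
      DifferentiableAt.fun_sum fun k _ => (dM j k x hx).mul (dm1 k x hx)
    rw [pdir_add ((dq x hx).fun_mul (dl1 j x hx)) hsum_d,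
      pdir_mul (dq x hx) (dl1 j x hx),
      pdir_sum (fun k (_ : k ∈ (Finset.univ : Finset (Fin n))) =>
        (dM j k x hx).fun_mul (dm1 k x hx)),
      Finset.sum_congr rfl (fun k (_ : k ∈ (Finset.univ : Finset (Fin n))) =>
        pdir_mul (dM j k x hx) (dm1 k x hx)),
      Finset.sum_add_distrib]
  rw [Finset.sum_congr rfl (fun j (_ : j ∈ (Finset.univ : Finset (Fin n))) => hT5 j)]
  exact key_algebra hMne (lam x) (∑ i, pdir n i (u i) x)
    (fun j => pdir n j lam x) (fun j => pdir n j mu x)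
    (fun j => pdir n j (pdir n j lam) x)
    (fun j => pdir n j (fun z => ∑ i, pdir n i (u i) z) x)
    (fun j => pdir n j (pdir n j (fun z => ∑ i, pdir n i (u i) z)) x)
    (fun j => ∑ k, (pdir n k (u j) x + pdir n j (u k) x) * pdir n j (pdir n k mu) x)
    (fun j => ∑ k, (pdir n k (u j) x + pdir n j (u k) x) * pdir n j (pdir n k mu) x)
    (fun j => ∑ k, pdir n j (fun z => pdir n k (u j) z + pdir n j (u k) z) x * pdir n k mu x)
    (fun j => ∑ k, pdir n j (fun z => pdir n k (u j) z + pdir n j (u k) z) x * pdir n k mu x)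
    (fun j => ∑ k, pdir n k (fun z => pdir n k (u j) z + pdir n j (u k) z) x)
    (fun j => ∑ k, pdir n k mu x * (pdir n k (u j) x + pdir n j (u k) x))
    (fun j => ∑ k, (pdir n k (u j) x + pdir n j (u k) x) * pdir n k mu x)
    (fun j => ∑ k, pdir n j (pdir n k (fun z => pdir n k (u j) z + pdir n j (u k) z)) x)
    (fun j => Finset.sum_congr rfl fun k _ => mul_comm _ _)
    (fun j => rfl) (fun j => rfl)
    (fun j => by linarith [hH' j])
    (fun j => by linarith [hS' j])
    hJ
end
end

section
/- (Abstract vanishing-order lemma.) Let 0 < R₂ < R₃, let B > 0 and C ≥ 1 be constants, and let f : (0, R₃] → [0, ∞) be nondecreasing with f(R₂) > 0. Suppose that for every R₁ ∈ (0, R₂) one has f(R₂) ≤ C f(R₁)^{τ} f(R₃)^{1−τ} with τ = τ(R₁) = B/(log(e R₂/R₁) + B). Then there exist constants K > 0 and m > 0, with K = f(R₃) and m ≤ C̃ (1 + log(C f(R₃)/f(R₂))) for a constant C̃ depending only on B and R₂, such that f(R) ≥ K R^m for all sufficiently small R > 0. -/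
open Real Set

/-- **Abstract vanishing-order lemma.** Let `0 < R₂ < R₃`, `B > 0`. There is a
constant `C̃ > 0` depending only on `B` and `R₂` such that: for every `C ≥ 1` and
every nondecreasing `f : (0,R₃] → [0,∞)` with `f(R₂) > 0` satisfying the optimal
three-ball inequality `f(R₂) ≤ C f(R₁)^τ f(R₃)^{1-τ}`,
`τ = B/(log(eR₂/R₁) + B)`, for all `R₁ ∈ (0,R₂)`, there are `K > 0` and `m > 0`
with `K = f(R₃)`, `m ≤ C̃ (1 + log(C f(R₃)/f(R₂)))`, and `f(R) ≥ K R^m` for all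
sufficiently small `R > 0`. -/
theorem abstract_vanishing_order (R₂ R₃ B : ℝ) (hR₂ : 0 < R₂) (hR₂₃ : R₂ < R₃)
    (hB : 0 < B) :
    ∃ Ct : ℝ, 0 < Ct ∧
      ∀ (C : ℝ) (f : ℝ → ℝ), 1 ≤ C →
        (∀ x ∈ Set.Ioc (0 : ℝ) R₃, 0 ≤ f x) →
        MonotoneOn f (Set.Ioc (0 : ℝ) R₃) →
        0 < f R₂ →
        (∀ R₁ : ℝ, 0 < R₁ → R₁ < R₂ →
          f R₂ ≤ C * f R₁ ^ (B / (Real.log (Real.exp 1 * R₂ / R₁) + B)) *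
            f R₃ ^ (1 - B / (Real.log (Real.exp 1 * R₂ / R₁) + B))) →
        ∃ K m : ℝ, 0 < K ∧ 0 < m ∧ K = f R₃ ∧
          m ≤ Ct * (1 + Real.log (C * f R₃ / f R₂)) ∧
          ∃ ε : ℝ, 0 < ε ∧ ∀ R : ℝ, 0 < R → R < ε → K * R ^ m ≤ f R := by
  refine ⟨2 / B, by positivity, ?_⟩
  intro C f hC hf0 hmono hfR₂ hineq
  have hR₃ : 0 < R₃ := hR₂.trans hR₂₃
  have hR₂mem : R₂ ∈ Set.Ioc (0:ℝ) R₃ := ⟨hR₂, hR₂₃.le⟩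
  have hR₃mem : R₃ ∈ Set.Ioc (0:ℝ) R₃ := ⟨hR₃, le_refl _⟩
  have hf23 : f R₂ ≤ f R₃ := hmono hR₂mem hR₃mem hR₂₃.le
  have hfR₃ : 0 < f R₃ := lt_of_lt_of_le hfR₂ hf23
  have hC0 : (0:ℝ) < C := lt_of_lt_of_le one_pos hC
  set A := C * f R₃ / f R₂ with hA
  have hA1 : 1 ≤ A := by
    rw [hA, le_div_iff₀ hfR₂]
    nlinarith
  have hlogA : 0 ≤ Real.log A := Real.log_nonneg hA1
  set D := Real.log (Real.exp 1 * R₂) + B with hD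
  set m := 2 / B * (1 + Real.log A) with hm
  have hmpos : 0 < m := by
    rw [hm]; positivity
  refine ⟨f R₃, m, hfR₃, hmpos, rfl, le_refl _,
    min R₂ (Real.exp (-(|D| + 1))), lt_min hR₂ (Real.exp_pos _), ?_⟩
  intro R hR hRε
  have hRR₂ : R < R₂ := hRε.trans_le (min_le_left _ _)
  have hlogR : Real.log R < -(|D| + 1) := by
    have h1 : R < Real.exp (-(|D| + 1)) := hRε.trans_le (min_le_right _ _)
    calc Real.log R < Real.log (Real.exp (-(|D| + 1))) := Real.log_lt_log hR h1
      _ = -(|D| + 1) := Real.log_exp _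
  have habs : D ≤ |D| := le_abs_self D
  have habs' : -|D| ≤ D := neg_abs_le D
  have hnegR : 1 ≤ -Real.log R := by linarith [abs_nonneg D]
  have hT : Real.log (Real.exp 1 * R₂ / R) + B = D - Real.log R := by
    rw [Real.log_div (by positivity) (ne_of_gt hR)]
    ring
  have hTpos : 0 < D - Real.log R := by linarith
  have hTlt : D - Real.log R ≤ 2 * (-Real.log R) := by linarith
  have key := hineq R hR hRR₂
  rw [hT] at key
  set T := D - Real.log R with hTdef
  set τ := B / T with hτ
  have hτpos : 0 < τ := div_pos hB hTpos
  have hfR : 0 < f R := by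
    rcases lt_or_eq_of_le (hf0 R ⟨hR, by linarith⟩) with h | h
    · exact h
    · exfalso
      rw [← h, Real.zero_rpow (ne_of_gt hτpos)] at key
      nlinarith
  -- take logs of the three-ball inequality
  have hlog : Real.log (f R₂) ≤ Real.log C + τ * Real.log (f R)
      + (1 - τ) * Real.log (f R₃) := by
    have h1 : Real.log (f R₂) ≤ Real.log (C * f R ^ τ * f R₃ ^ (1 - τ)) :=
      Real.log_le_log hfR₂ key
    rw [Real.log_mul (by positivity) (by positivity),
      Real.log_mul (by positivity) (by positivity),
      Real.log_rpow hfR, Real.log_rpow hfR₃] at h1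
    linarith
  have hlogAeq : Real.log A = Real.log C + Real.log (f R₃) - Real.log (f R₂) := by
    rw [hA, Real.log_div (by positivity) (ne_of_gt hfR₂),
      Real.log_mul (ne_of_gt hC0) (ne_of_gt hfR₃)]
  -- rearrange
  have h2 : -Real.log A ≤ τ * (Real.log (f R) - Real.log (f R₃)) := by
    rw [hlogAeq]
    nlinarith [hlog]
  have h3 : -(Real.log A) * T ≤ B * (Real.log (f R) - Real.log (f R₃)) := by
    have h4 := mul_le_mul_of_nonneg_right h2 hTpos.le
    have h5 : τ * (Real.log (f R) - Real.log (f R₃)) * T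
        = B * (Real.log (f R) - Real.log (f R₃)) := by
      rw [hτ]; field_simp
    linarith [h4, h5.le, h5.ge]
  have hBm : B * m = 2 * (1 + Real.log A) := by
    rw [hm]; field_simp
  have hgoal : Real.log (f R₃) + m * Real.log R ≤ Real.log (f R) := by
    have h6 : Real.log A * T ≤ Real.log A * (2 * (-Real.log R)) :=
      mul_le_mul_of_nonneg_left hTlt hlogA
    have h7 : B * (m * Real.log R) = 2 * (1 + Real.log A) * Real.log R := by
      rw [← hBm]; ring
    -- B * (m * log R) ≤ -(log A * T) ≤ B * (log fR - log fR₃)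
    have h9 : 2 * Real.log A * (-Real.log R) ≤ 2 * (1 + Real.log A) * (-Real.log R) := by
      linarith
    have h8 : B * (m * Real.log R) ≤ B * (Real.log (f R) - Real.log (f R₃)) := by
      linarith
    have := (mul_le_mul_iff_right₀ hB).mp h8
    linarith
  calc f R₃ * R ^ m = Real.exp (Real.log (f R₃) + m * Real.log R) := by
        rw [Real.exp_add, Real.exp_log hfR₃, Real.rpow_def_of_pos hR]
        ring_nf
    _ ≤ Real.exp (Real.log (f R)) := Real.exp_le_exp.mpr hgoal
    _ = f R := Real.exp_log hfR
end
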